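/- Let (X,d) be a metric space and μ a Borel measure on X, finite and positive on balls; write V(x,r)=μ(B(x,r)). Fix m≥2, D≥1 and κ∈[0,m/(m−1)), and assume condition (II.2): V(x,τr) ≤ D τ^D V(x,r) exp(τ^κ + r^κ) for all x∈X, τ≥1, r>0. Let p:(0,∞)×X×X→[0,∞) be measurable, symmetric, and suppose there are constants A, c₁, c₂>0 such that p_s(x,y) ≤ A·V(y,s^{1/m})^{−1}·exp(−c₁ (d(x,y)^m/s)^{1/(m−1)} + c₂ s^{κ/m}) for all s>0 and x,y∈X. Then there exist constants C, c′, c″>0 such that for every ball B=B(x₀,r₀), every measurable b: X→[0,∞) supported in B with ∫_X b dμ < ∞, and every s>0, ∫_{X∖B(x₀,2r₀)} ( ∫_B p_{2s}(x,y) b(y) dμ(y) )^{1/2} dμ(x) ≤ C · exp(−c′ (r₀^m/s)^{1/(m−1)} + c″ s^{κ/m}) · ( (∫_X b dμ) · sup_{y∈B} V(y,(2s)^{1/m}) )^{1/2}. -/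

import Mathlib

open MeasureTheory Metric Real

lemma young {ε θ : ℝ} (a : ℝ) (ha : 0 ≤ a) (hε : 0 < ε) (hθ0 : 0 ≤ θ) (hθ1 : θ < 1) :
    ∃ C : ℝ, 0 ≤ C ∧ ∀ t : ℝ, 0 ≤ t → a * t ^ θ ≤ ε * t + C := by
  set T : ℝ := max 1 ((a / ε) ^ (1 / (1 - θ))) with hT
  have hT1 : 1 ≤ T := le_max_left _ _
  have hT0 : 0 < T := lt_of_lt_of_le one_pos hT1
  refine ⟨a * T ^ θ, by positivity, fun t ht => ?_⟩
  rcases le_total t T with h | h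
  · have : a * t ^ θ ≤ a * T ^ θ :=
      mul_le_mul_of_nonneg_left (Real.rpow_le_rpow ht h hθ0) ha
    nlinarith [mul_nonneg hε.le ht]
  · have ht1 : (1:ℝ) ≤ t := le_trans hT1 h
    have ht0 : 0 < t := lt_of_lt_of_le one_pos ht1
    have key : a ≤ ε * t ^ (1 - θ) := by
      have h1 : (a / ε) ^ (1 / (1 - θ)) ≤ t := le_trans (le_max_right _ _) h
      have h2 : ((a / ε) ^ (1 / (1 - θ))) ^ (1 - θ) ≤ t ^ (1 - θ) :=
        Real.rpow_le_rpow (Real.rpow_nonneg (by positivity) _) h1 (by linarith)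
      rw [← Real.rpow_mul (by positivity), one_div,
        inv_mul_cancel₀ (by linarith : (1:ℝ) - θ ≠ 0), Real.rpow_one] at h2
      calc a = ε * (a / ε) := by field_simp
      _ ≤ ε * t ^ (1 - θ) := mul_le_mul_of_nonneg_left h2 hε.le
    have : a * t ^ θ ≤ ε * t ^ (1 - θ) * t ^ θ :=
      mul_le_mul_of_nonneg_right key (Real.rpow_nonneg ht _)
    have hrw : ε * t ^ (1 - θ) * t ^ θ = ε * t := by
      rw [mul_assoc, ← Real.rpow_add ht0]; norm_num
    rw [hrw] at this
    have : a * t ^ θ ≤ ε * t := this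
    nlinarith [Real.rpow_nonneg hT0.le θ, mul_nonneg ha (Real.rpow_nonneg hT0.le θ)]

lemma seq_bound (m D κ c : ℝ) (hm : 2 ≤ m) (hD : 1 ≤ D) (hκ0 : 0 ≤ κ)
    (hκ : κ < m / (m - 1)) (hc : 0 < c) :
    ∃ M : ℝ, 0 < M ∧ ∀ k : ℕ,
      D * (2 * (2:ℝ)^k) ^ D * Real.exp ((2 * (2:ℝ)^k) ^ κ) *
        Real.exp (-c * ((2:ℝ)^k) ^ (m / (m-1))) ≤ M * (1/2)^k := by
  set β : ℝ := m / (m - 1) with hβ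
  have hm1 : (0:ℝ) < m - 1 := by linarith
  have hβ1 : 1 < β := by rw [hβ, lt_div_iff₀ hm1]; linarith
  have hβ2 : β ≤ 2 := by rw [hβ, div_le_iff₀ hm1]; linarith
  have hβ0 : 0 < β := by linarith
  obtain ⟨Ca, hCa0, hCa⟩ := young (ε := c/4) (θ := 1/β) (2*D+1) (by linarith)
    (by positivity) (by positivity) (by rw [div_lt_one hβ0]; exact hβ1)
  obtain ⟨Cb, hCb0, hCb⟩ := young (ε := c/4) (θ := κ/β) 4 (by norm_num)
    (by positivity) (by positivity) (by rw [div_lt_one hβ0]; exact hκ)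
  refine ⟨Real.exp (D + Ca + Cb), Real.exp_pos _, fun k => ?_⟩
  set w : ℝ := (2:ℝ)^k with hw
  have hw1 : (1:ℝ) ≤ w := one_le_pow₀ (by norm_num)
  have hw0 : (0:ℝ) < w := by linarith
  set t : ℝ := w ^ β with htdef
  have ht0 : (0:ℝ) ≤ t := Real.rpow_nonneg hw0.le _
  have htw : t ^ (1/β) = w := by
    rw [htdef, ← Real.rpow_natCast 2 k] at *
    rw [← Real.rpow_mul (by positivity), mul_one_div, div_self (ne_of_gt hβ0), Real.rpow_one]
  have htκ : t ^ (κ/β) = w ^ κ := by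
    rw [htdef, ← Real.rpow_mul hw0.le]
    congr 1
    field_simp
  -- key log inequality
  have hlog2w : Real.log (2*w) ≤ 2*w := by
    have := Real.log_le_sub_one_of_pos (by linarith : (0:ℝ) < 2*w)
    linarith
  have hlogw : Real.log w ≤ w := by
    have := Real.log_le_sub_one_of_pos hw0
    linarith
  have hlogD : Real.log D ≤ D := by
    have := Real.log_le_sub_one_of_pos (by linarith : (0:ℝ) < D)
    linarith
  have h2wκ : (2*w) ^ κ ≤ 4 * t ^ (κ/β) := by
    rw [htκ, Real.mul_rpow (by norm_num) hw0.le]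
    have h1 : (2:ℝ) ^ κ ≤ (2:ℝ) ^ (2:ℝ) :=
      Real.rpow_le_rpow_of_exponent_le one_le_two (by linarith)
    have h2 : (2:ℝ) ^ (2:ℝ) = 4 := by
      rw [show (2:ℝ) = ((2:ℕ):ℝ) by norm_num, Real.rpow_natCast]; norm_num
    nlinarith [Real.rpow_nonneg hw0.le κ, Real.rpow_nonneg (by norm_num : (0:ℝ) ≤ 2) κ]
  have hwt : w ≤ t := by
    calc w = w ^ (1:ℝ) := (Real.rpow_one w).symm
    _ ≤ w ^ β := Real.rpow_le_rpow_of_exponent_le hw1 (by linarith)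
  have key : Real.log D + Real.log (2*w) * D + (2*w)^κ + Real.log w ≤ c*t + (D + Ca + Cb) := by
    have h1 : Real.log (2*w) * D ≤ 2*w*D :=
      mul_le_mul_of_nonneg_right hlog2w (by linarith)
    have h2 : (2*D+1) * t ^ (1/β) ≤ c/4 * t + Ca := hCa t ht0
    rw [htw] at h2
    have h3 : 4 * t ^ (κ/β) ≤ c/4 * t + Cb := hCb t ht0
    have h4 : (2*w)^κ ≤ c/4 * t + Cb := le_trans h2wκ h3
    nlinarith
  -- now assemble
  have hrhs : (Real.exp (D + Ca + Cb)) * (1/2:ℝ)^k = Real.exp (D + Ca + Cb) / w := by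
    rw [hw, div_pow, one_pow]; ring
  rw [hrhs, le_div_iff₀ hw0]
  have hD0 : (0:ℝ) < D := by linarith
  have hLHS : D * (2*w) ^ D * Real.exp ((2*w)^κ) * Real.exp (-c * t) * w =
      Real.exp (Real.log D + Real.log (2*w) * D + (2*w)^κ + (-c*t) + Real.log w) := by
    rw [Real.exp_add, Real.exp_add, Real.exp_add, Real.exp_add,
      Real.exp_log hD0, Real.exp_log hw0, ← Real.rpow_def_of_pos (by linarith : (0:ℝ) < 2*w)]
  rw [hLHS]
  apply Real.exp_le_exp.2
  linarith

lemma intLemma {X : Type*} [MetricSpace X] [MeasurableSpace X] [BorelSpace X]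
    (μ : Measure X) (m D κ : ℝ) (hm : 2 ≤ m) (hD : 1 ≤ D) (hκ0 : 0 ≤ κ)
    (hκ : κ < m / (m - 1))
    (hVD : ∀ (x : X) (τ r : ℝ), 1 ≤ τ → 0 < r →
      μ (ball x (τ * r)) ≤
        ENNReal.ofReal (D * τ ^ D * Real.exp (τ ^ κ + r ^ κ)) * μ (ball x r))
    (c : ℝ) (hc : 0 < c) :
    ∃ C₅ : ℝ, 0 < C₅ ∧ ∀ (x₀ : X) (s : ℝ), 0 < s →
      ∫⁻ x, ENNReal.ofReal (Real.exp (-c * (dist x x₀ ^ m / s) ^ (1/(m-1)))) ∂μ ≤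
        ENNReal.ofReal (C₅ * Real.exp (s ^ (κ/m))) * μ (ball x₀ (s ^ (1/m))) := by
  have hm1 : (0:ℝ) < m - 1 := by linarith
  have hm0 : (0:ℝ) < m := by linarith
  obtain ⟨M, hM0, hM⟩ := seq_bound m D κ c hm hD hκ0 hκ hc
  refine ⟨4 * (1 + M), by positivity, fun x₀ s hs => ?_⟩
  set r : ℝ := s ^ (1/m) with hrdef
  have hr0 : 0 < r := Real.rpow_pos_of_pos hs _
  have hrm : r ^ m = s := by
    rw [hrdef, ← Real.rpow_mul hs.le, one_div, inv_mul_cancel₀ (ne_of_gt hm0), Real.rpow_one]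
  have hrκ : r ^ κ = s ^ (κ/m) := by
    rw [hrdef, ← Real.rpow_mul hs.le, one_div, inv_mul_eq_div]
  set f : X → ENNReal :=
    fun x => ENNReal.ofReal (Real.exp (-c * (dist x x₀ ^ m / s) ^ (1/(m-1)))) with hfdef
  set C : ℕ → Set X := fun k => ball x₀ ((2:ℝ)^k * r) with hCdef
  have hCmono : Monotone C := by
    intro k l hkl
    exact ball_subset_ball (mul_le_mul_of_nonneg_right
      (pow_le_pow_right₀ one_le_two hkl) hr0.le)
  have hCuniv : ⋃ k, C k = Set.univ := by
    rw [Set.eq_univ_iff_forall]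
    intro x
    obtain ⟨n, hn⟩ := pow_unbounded_of_one_lt (dist x x₀ / r) (one_lt_two (α := ℝ))
    exact Set.mem_iUnion.2 ⟨n, by simpa [hCdef, mem_ball, dist_comm, div_lt_iff₀ hr0] using hn⟩
  have hf1 : ∀ x, f x ≤ 1 := by
    intro x
    apply ENNReal.ofReal_le_one.2
    apply Real.exp_le_one_iff.2
    have : (0:ℝ) ≤ (dist x x₀ ^ m / s) ^ (1/(m-1)) :=
      Real.rpow_nonneg (div_nonneg (Real.rpow_nonneg dist_nonneg _) hs.le) _
    nlinarith
  set K : ENNReal := ENNReal.ofReal (Real.exp (s ^ (κ/m))) * μ (ball x₀ r) with hKdef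
  have hexp1 : (1:ℝ) ≤ Real.exp (s ^ (κ/m)) :=
    Real.one_le_exp (Real.rpow_nonneg hs.le _)
  have hterm : ∀ j : ℕ, ∫⁻ x in disjointed C j, f x ∂μ ≤
      ENNReal.ofReal (2 * (1 + M)) * (2⁻¹ : ENNReal)^j * K := by
    intro j
    match j with
    | 0 =>
      rw [disjointed_zero]
      calc ∫⁻ x in C 0, f x ∂μ ≤ ∫⁻ _x in C 0, 1 ∂μ :=
            setLIntegral_mono measurable_const (fun x _ => hf1 x)
      _ = μ (ball x₀ r) := by
            rw [setLIntegral_const, one_mul, hCdef]; norm_num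
      _ ≤ ENNReal.ofReal (2 * (1 + M)) * (2⁻¹ : ENNReal)^0 * K := by
            rw [hKdef, pow_zero, mul_one]
            have h1 : (1:ENNReal) ≤ ENNReal.ofReal (2 * (1+M)) := by
              rw [show (1:ENNReal) = ENNReal.ofReal 1 by simp]
              exact ENNReal.ofReal_le_ofReal (by linarith)
            have he1 : (1:ENNReal) ≤ ENNReal.ofReal (Real.exp (s ^ (κ/m))) := by
              rw [show (1:ENNReal) = ENNReal.ofReal 1 by simp]
              exact ENNReal.ofReal_le_ofReal hexp1
            calc μ (ball x₀ r) = 1 * (1 * μ (ball x₀ r)) := by rw [one_mul, one_mul]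
            _ ≤ ENNReal.ofReal (2 * (1+M)) *
                (ENNReal.ofReal (Real.exp (s ^ (κ/m))) * μ (ball x₀ r)) :=
              mul_le_mul' h1 (mul_le_mul' he1 le_rfl)
    | Nat.succ k =>
      have hsub : disjointed C (k+1) ⊆ C (k+1) \ C k := by
        rw [hCmono.disjointed_add_one]
      have hfb : ∀ x ∈ disjointed C (k+1),
          f x ≤ ENNReal.ofReal (Real.exp (-c * ((2:ℝ)^k) ^ (m/(m-1)))) := by
        intro x hx
        obtain ⟨hx1, hx2⟩ := hsub hx
        have hd : (2:ℝ)^k * r ≤ dist x x₀ := by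
          by_contra h
          exact hx2 (by simpa [hCdef, mem_ball, dist_comm] using lt_of_not_ge h)
        have hd0 : (0:ℝ) ≤ (2:ℝ)^k * r := by positivity
        have h1 : ((2:ℝ)^k) ^ (m/(m-1)) ≤ (dist x x₀ ^ m / s) ^ (1/(m-1)) := by
          have h2 : ((2:ℝ)^k * r) ^ m ≤ dist x x₀ ^ m :=
            Real.rpow_le_rpow hd0 hd hm0.le
          have h3 : ((2:ℝ)^k * r) ^ m = ((2:ℝ)^k) ^ m * s := by
            rw [Real.mul_rpow (by positivity) hr0.le, hrm]
          have h4 : ((2:ℝ)^k) ^ m ≤ dist x x₀ ^ m / s := by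
            rw [le_div_iff₀ hs]; nlinarith
          calc ((2:ℝ)^k) ^ (m/(m-1)) = (((2:ℝ)^k) ^ m) ^ (1/(m-1)) := by
                rw [← Real.rpow_mul (by positivity), mul_one_div]
          _ ≤ (dist x x₀ ^ m / s) ^ (1/(m-1)) :=
                Real.rpow_le_rpow (by positivity) h4 (by positivity)
        apply ENNReal.ofReal_le_ofReal
        apply Real.exp_le_exp.2
        nlinarith
      calc ∫⁻ x in disjointed C (k+1), f x ∂μ
          ≤ ∫⁻ _x in disjointed C (k+1),
              ENNReal.ofReal (Real.exp (-c * ((2:ℝ)^k) ^ (m/(m-1)))) ∂μ :=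
            setLIntegral_mono measurable_const hfb
      _ = ENNReal.ofReal (Real.exp (-c * ((2:ℝ)^k) ^ (m/(m-1)))) * μ (disjointed C (k+1)) :=
            setLIntegral_const _ _
      _ ≤ ENNReal.ofReal (Real.exp (-c * ((2:ℝ)^k) ^ (m/(m-1)))) * μ (C (k+1)) := by
            apply mul_le_mul' le_rfl
            exact measure_mono (le_trans hsub Set.diff_subset)
      _ ≤ ENNReal.ofReal (Real.exp (-c * ((2:ℝ)^k) ^ (m/(m-1)))) *
            (ENNReal.ofReal (D * ((2:ℝ)^(k+1)) ^ D *
              Real.exp (((2:ℝ)^(k+1)) ^ κ + r ^ κ)) * μ (ball x₀ r)) := by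
            apply mul_le_mul' le_rfl
            exact hVD x₀ ((2:ℝ)^(k+1)) r (one_le_pow₀ one_le_two) hr0
      _ ≤ ENNReal.ofReal (2 * (1 + M)) * (2⁻¹ : ENNReal)^(k+1) * K := by
            rw [hKdef]
            have h2 : (2:ℝ)^(k+1) = 2 * (2:ℝ)^k := by ring
            rw [h2, Real.exp_add, hrκ]
            rw [← mul_assoc, ← ENNReal.ofReal_mul (by positivity)]
            have hgoal : Real.exp (-c * ((2:ℝ)^k) ^ (m/(m-1))) *
                (D * (2 * (2:ℝ)^k) ^ D *
                  (Real.exp ((2 * (2:ℝ)^k) ^ κ) * Real.exp (s ^ (κ/m)))) ≤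
                (2 * (1 + M)) * ((1/2:ℝ)^(k+1)) * Real.exp (s ^ (κ/m)) := by
              have := hM k
              have he : (0:ℝ) < Real.exp (s ^ (κ/m)) := Real.exp_pos _
              have hh : Real.exp (-c * ((2:ℝ)^k) ^ (m/(m-1))) *
                  (D * (2 * (2:ℝ)^k) ^ D * Real.exp ((2 * (2:ℝ)^k) ^ κ)) ≤
                  M * (1/2)^k := by nlinarith
              have h12 : M * ((1/2:ℝ))^k = 2 * M * (1/2:ℝ)^(k+1) := by ring
              have h13 : (0:ℝ) ≤ (1/2:ℝ)^(k+1) := by positivity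
              nlinarith
            calc ENNReal.ofReal (Real.exp (-c * ((2:ℝ)^k) ^ (m/(m-1))) *
                  (D * (2 * (2:ℝ)^k) ^ D *
                    (Real.exp ((2 * (2:ℝ)^k) ^ κ) * Real.exp (s ^ (κ/m))))) *
                  μ (ball x₀ r)
                ≤ ENNReal.ofReal ((2 * (1 + M)) * ((1/2:ℝ)^(k+1)) *
                    Real.exp (s ^ (κ/m))) * μ (ball x₀ r) :=
                  mul_le_mul' (ENNReal.ofReal_le_ofReal hgoal) le_rfl
            _ = ENNReal.ofReal (2 * (1 + M)) * (2⁻¹ : ENNReal)^(k+1) *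
                  (ENNReal.ofReal (Real.exp (s ^ (κ/m))) * μ (ball x₀ r)) := by
                  rw [ENNReal.ofReal_mul (by positivity), ENNReal.ofReal_mul (by positivity)]
                  have : ENNReal.ofReal ((1/2:ℝ)^(k+1)) = (2⁻¹ : ENNReal)^(k+1) := by
                    rw [ENNReal.ofReal_pow (by norm_num)]
                    congr 1
                    rw [ENNReal.ofReal_div_of_pos (by norm_num)]
                    simp [one_div]
                  rw [this]; ring
  calc ∫⁻ x, f x ∂μ = ∫⁻ x in ⋃ k, disjointed C k, f x ∂μ := by
        rw [iUnion_disjointed, hCuniv, Measure.restrict_univ]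
  _ ≤ ∑' k, ∫⁻ x in disjointed C k, f x ∂μ := lintegral_iUnion_le _ _
  _ ≤ ∑' k : ℕ, ENNReal.ofReal (2 * (1 + M)) * (2⁻¹ : ENNReal)^k * K :=
        ENNReal.tsum_le_tsum hterm
  _ = ENNReal.ofReal (2 * (1 + M)) * K * ∑' k : ℕ, (2⁻¹ : ENNReal)^k := by
        rw [← ENNReal.tsum_mul_left]
        congr 1; ext k; ring
  _ = ENNReal.ofReal (2 * (1 + M)) * K * 2 := by
        rw [ENNReal.tsum_geometric]
        norm_num
  _ = ENNReal.ofReal (4 * (1 + M) * Real.exp (s ^ (κ/m))) * μ (ball x₀ r) := by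
        rw [hKdef]
        rw [show (2 : ENNReal) = ENNReal.ofReal 2 by norm_num]
        rw [show ENNReal.ofReal (2 * (1+M)) * (ENNReal.ofReal (Real.exp (s ^ (κ/m))) * μ (ball x₀ r)) * ENNReal.ofReal 2
          = ENNReal.ofReal (2 * (1+M)) * ENNReal.ofReal 2 * ENNReal.ofReal (Real.exp (s ^ (κ/m))) * μ (ball x₀ r) by ring]
        rw [← ENNReal.ofReal_mul (by positivity), ← ENNReal.ofReal_mul (by positivity)]
        congr 2
        ring

lemma tau_bound (m D κ c' : ℝ) (hm : 2 ≤ m) (hD : 1 ≤ D) (hκ0 : 0 ≤ κ)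
    (hκ : κ < m / (m - 1)) (hc' : 0 < c') :
    ∃ C₆ : ℝ, 0 < C₆ ∧ ∀ u : ℝ, 0 ≤ u →
      D * (1 + 2*u) ^ D * Real.exp ((1 + 2*u) ^ κ) ≤
        C₆ * Real.exp (c' * u ^ (m / (m-1))) := by
  set β : ℝ := m / (m - 1) with hβ
  have hm1 : (0:ℝ) < m - 1 := by linarith
  have hβ1 : 1 < β := by rw [hβ, lt_div_iff₀ hm1]; linarith
  have hβ2 : β ≤ 2 := by rw [hβ, div_le_iff₀ hm1]; linarith
  have hβ0 : 0 < β := by linarith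
  obtain ⟨Ca, hCa0, hCa⟩ := young (ε := c'/2) (θ := 1/β) (2*D) (by linarith)
    (by positivity) (by positivity) (by rw [div_lt_one hβ0]; exact hβ1)
  obtain ⟨Cb, hCb0, hCb⟩ := young (ε := c'/2) (θ := κ/β) 9 (by norm_num)
    (by positivity) (by positivity) (by rw [div_lt_one hβ0]; exact hκ)
  refine ⟨Real.exp (D + Ca + Cb + 9), Real.exp_pos _, fun u hu => ?_⟩
  set t : ℝ := u ^ β with htdef
  have ht0 : (0:ℝ) ≤ t := Real.rpow_nonneg hu _
  have htu : t ^ (1/β) = u := by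
    rw [htdef, ← Real.rpow_mul hu, mul_one_div, div_self (ne_of_gt hβ0), Real.rpow_one]
  have htκ : t ^ (κ/β) = u ^ κ := by
    rw [htdef, ← Real.rpow_mul hu]
    congr 1
    field_simp
  have hτ0 : (0:ℝ) < 1 + 2*u := by linarith
  have hD0 : (0:ℝ) < D := by linarith
  have hlogτ : Real.log (1 + 2*u) ≤ 2*u := by
    have := Real.log_le_sub_one_of_pos hτ0
    linarith
  have hlogD : Real.log D ≤ D := by
    have := Real.log_le_sub_one_of_pos hD0
    linarith
  -- (1+2u)^κ ≤ 9 * (1 + u^κ)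
  have hτκ : (1 + 2*u) ^ κ ≤ 9 * (1 + u ^ κ) := by
    have h1 : (1 + 2*u : ℝ) ≤ 3 * max 1 u := by
      rcases le_total u 1 with h | h
      · have : max 1 u = 1 := max_eq_left h
        rw [this]; linarith
      · have : max 1 u = u := max_eq_right h
        rw [this]; linarith
    have h2 : (1 + 2*u) ^ κ ≤ (3 * max 1 u) ^ κ :=
      Real.rpow_le_rpow hτ0.le h1 hκ0
    have hmax0 : (0:ℝ) < max 1 u := lt_of_lt_of_le one_pos (le_max_left _ _)
    have h3 : (3 * max 1 u) ^ κ = (3:ℝ)^κ * (max 1 u)^κ :=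
      Real.mul_rpow (by norm_num) hmax0.le
    have h4 : (3:ℝ)^κ ≤ 9 := by
      have : (3:ℝ)^κ ≤ (3:ℝ)^(2:ℝ) :=
        Real.rpow_le_rpow_of_exponent_le (by norm_num) (by linarith)
      have h9 : (3:ℝ)^(2:ℝ) = 9 := by
        rw [show (2:ℝ) = ((2:ℕ):ℝ) by norm_num, Real.rpow_natCast]; norm_num
      linarith
    have h5 : (max 1 u)^κ ≤ 1 + u^κ := by
      rcases le_total u 1 with h | h
      · have : max 1 u = 1 := max_eq_left h
        rw [this, Real.one_rpow]
        have : (0:ℝ) ≤ u^κ := Real.rpow_nonneg hu _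
        linarith
      · have : max 1 u = u := max_eq_right h
        rw [this]
        have : (0:ℝ) ≤ u^κ := Real.rpow_nonneg hu _
        linarith
    have h6 : (0:ℝ) ≤ (max 1 u)^κ := Real.rpow_nonneg hmax0.le _
    calc (1 + 2*u) ^ κ ≤ (3:ℝ)^κ * (max 1 u)^κ := by rw [← h3]; exact h2
    _ ≤ 9 * (max 1 u)^κ := mul_le_mul_of_nonneg_right h4 h6
    _ ≤ 9 * (1 + u^κ) := by nlinarith
  have key : Real.log D + Real.log (1 + 2*u) * D + (1 + 2*u)^κ ≤
      c' * t + (D + Ca + Cb + 9) := by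
    have h1 : Real.log (1 + 2*u) * D ≤ 2*u*D := by
      apply mul_le_mul_of_nonneg_right hlogτ hD0.le
    have h2 : (2*D) * t ^ (1/β) ≤ c'/2 * t + Ca := hCa t ht0
    rw [htu] at h2
    have h3 : 9 * t ^ (κ/β) ≤ c'/2 * t + Cb := hCb t ht0
    rw [htκ] at h3
    nlinarith
  have hLHS : D * (1 + 2*u) ^ D * Real.exp ((1 + 2*u)^κ) =
      Real.exp (Real.log D + Real.log (1 + 2*u) * D + (1 + 2*u)^κ) := by
    rw [Real.exp_add, Real.exp_add, Real.exp_log hD0,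
      ← Real.rpow_def_of_pos hτ0]
  rw [hLHS, show Real.exp (D + Ca + Cb + 9) * Real.exp (c' * u ^ β) =
    Real.exp (c' * u ^ β + (D + Ca + Cb + 9)) by rw [← Real.exp_add]; ring_nf]
  exact Real.exp_le_exp.2 (by rw [← htdef]; linarith)

lemma const_combine (sA sC C₅' c₂ c₃ Q T : ℝ) (hsA : 0 ≤ sA) (hsC : 0 ≤ sC)
    (hC₅ : 0 ≤ C₅') (hc₃ : 0 ≤ c₃) (hQ : 0 ≤ Q) :
    sC * Real.exp (c₃/16 * Q + T) * (sA * Real.exp (c₂ * T) * Real.exp (-(c₃/4) * Q)) *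
      (C₅' * Real.exp T) ≤ sA * sC * C₅' * Real.exp (-(c₃/8) * Q + (c₂+2) * T) := by
  have h1 : sC * Real.exp (c₃/16 * Q + T) * (sA * Real.exp (c₂ * T) *
      Real.exp (-(c₃/4) * Q)) * (C₅' * Real.exp T)
      = sA * sC * C₅' * Real.exp ((c₃/16 * Q + T) + c₂ * T + (-(c₃/4) * Q) + T) := by
    rw [Real.exp_add ((c₃/16 * Q + T) + c₂ * T + (-(c₃/4) * Q)) T,
        Real.exp_add ((c₃/16 * Q + T) + c₂ * T) (-(c₃/4) * Q),
        Real.exp_add (c₃/16 * Q + T) (c₂ * T)]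
    ring
  rw [h1]
  apply mul_le_mul_of_nonneg_left ?_ (by positivity)
  apply Real.exp_le_exp.2
  nlinarith

set_option maxHeartbeats 1000000 in
/-- The integrated off-ball estimate (3.11) in the proof of Theorem 3.1. -/
theorem stmt_10
    {X : Type*} [MetricSpace X] [MeasurableSpace X] [BorelSpace X]
    (μ : Measure X)
    (hμ : ∀ (x : X) (r : ℝ), 0 < r → 0 < μ (ball x r) ∧ μ (ball x r) < ⊤)
    (m D κ : ℝ) (hm : 2 ≤ m) (hD : 1 ≤ D) (hκ0 : 0 ≤ κ) (hκ : κ < m / (m - 1))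
    (hVD : ∀ (x : X) (τ r : ℝ), 1 ≤ τ → 0 < r →
      μ (ball x (τ * r)) ≤
        ENNReal.ofReal (D * τ ^ D * Real.exp (τ ^ κ + r ^ κ)) * μ (ball x r))
    (p : ℝ → X → X → ℝ)
    (hp_nonneg : ∀ (t : ℝ) (x y : X), 0 < t → 0 ≤ p t x y)
    (hp_meas : Measurable fun q : ℝ × X × X => p q.1 q.2.1 q.2.2)
    (hp_symm : ∀ (t : ℝ) (x y : X), 0 < t → p t x y = p t y x)
    (A c₁ c₂ : ℝ) (hA : 0 < A) (hc₁ : 0 < c₁) (hc₂ : 0 < c₂)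
    (hUB : ∀ (s : ℝ) (x y : X), 0 < s →
      p s x y ≤ A *
        Real.exp (-c₁ * (dist x y ^ m / s) ^ (1 / (m - 1)) + c₂ * s ^ (κ / m)) /
        (μ (ball y (s ^ (1 / m)))).toReal) :
    ∃ C c' c'' : ℝ, 0 < C ∧ 0 < c' ∧ 0 < c'' ∧
      ∀ (x₀ : X) (r₀ : ℝ), 0 < r₀ →
        ∀ b : X → ℝ, Measurable b → (∀ y, 0 ≤ b y) →
          (∀ y, y ∉ ball x₀ r₀ → b y = 0) →
          (∫⁻ y, ENNReal.ofReal (b y) ∂μ) < ⊤ →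
          ∀ s : ℝ, 0 < s →
            (∫⁻ x in (ball x₀ (2 * r₀))ᶜ,
                (∫⁻ y in ball x₀ r₀, ENNReal.ofReal (p (2 * s) x y * b y) ∂μ) ^
                  ((1 : ℝ) / 2) ∂μ) ≤
              ENNReal.ofReal
                  (C * Real.exp (-c' * (r₀ ^ m / s) ^ (1 / (m - 1)) + c'' * s ^ (κ / m))) *
                ((∫⁻ y, ENNReal.ofReal (b y) ∂μ) *
                    ⨆ y ∈ ball x₀ r₀, μ (ball y ((2 * s) ^ (1 / m)))) ^ ((1 : ℝ) / 2) := by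
  have hm1 : (0:ℝ) < m - 1 := by linarith
  have hm0 : (0:ℝ) < m := by linarith
  have hmm : m / (m - 1) ≤ 2 := by rw [div_le_iff₀ hm1]; linarith
  have hκm : κ / m ≤ 1 := by rw [div_le_one hm0]; linarith
  set c₃ : ℝ := c₁ / ((2:ℝ) ^ (m+1)) ^ (1/(m-1)) with hc₃def
  have h2m1 : (0:ℝ) < ((2:ℝ) ^ (m+1)) ^ (1/(m-1)) :=
    Real.rpow_pos_of_pos (Real.rpow_pos_of_pos two_pos _) _
  have hc₃ : 0 < c₃ := div_pos hc₁ h2m1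
  obtain ⟨C₅, hC₅0, hC₅⟩ := intLemma μ m D κ hm hD hκ0 hκ hVD (c₃/4) (by positivity)
  obtain ⟨C₆, hC₆0, hC₆⟩ := tau_bound m D κ (c₃/8) hm hD hκ0 hκ (by positivity)
  refine ⟨Real.sqrt A * Real.sqrt C₆ * C₅, c₃/8, c₂ + 2, by positivity, by positivity,
    by positivity, ?_⟩
  intro x₀ r₀ hr₀ b hbmeas hb0 hbsupp hbI s hs
  have h2s : (0:ℝ) < 2*s := by linarith
  set R : ℝ := (2*s) ^ (1/m) with hRdef
  have hR0 : 0 < R := Real.rpow_pos_of_pos h2s _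
  set I : ENNReal := ∫⁻ y, ENNReal.ofReal (b y) ∂μ with hIdef
  set Vb : ENNReal := ⨆ y ∈ ball x₀ r₀, μ (ball y R) with hVbdef
  have hVb_pos : 0 < Vb :=
    lt_of_lt_of_le (hμ x₀ R hR0).1
      (le_biSup (fun y => μ (ball y R)) (mem_ball_self hr₀))
  have hVb_lt : Vb < ⊤ := by
    refine lt_of_le_of_lt ?_ (hμ x₀ (R + r₀) (by positivity)).2
    refine iSup₂_le fun y hy => measure_mono (ball_subset_ball' ?_)
    rw [mem_ball] at hy; linarith
  -- the doubling comparison factor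
  set τ : ℝ := (R + 2*r₀)/R with hτdef
  have hτ1 : 1 ≤ τ := by rw [hτdef, le_div_iff₀ hR0]; linarith
  have hτR : τ * R = R + 2*r₀ := by
    rw [hτdef, div_mul_cancel₀ _ (ne_of_gt hR0)]
  set F : ℝ := D * τ^D * Real.exp (τ^κ + R^κ) with hFdef
  have hF0 : 0 < F := by positivity
  have hFV : ∀ y ∈ ball x₀ r₀, Vb ≤ ENNReal.ofReal F * μ (ball y R) := by
    intro y hy
    refine iSup₂_le fun z hz => ?_
    have h1 : ball z R ⊆ ball y (R + 2*r₀) := by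
      apply ball_subset_ball'
      rw [mem_ball] at hy hz
      have h := dist_triangle z x₀ y
      rw [dist_comm x₀ y] at h
      linarith
    calc μ (ball z R) ≤ μ (ball y (R + 2*r₀)) := measure_mono h1
    _ = μ (ball y (τ * R)) := by rw [hτR]
    _ ≤ ENNReal.ofReal F * μ (ball y R) := hVD y τ R hτ1 hR0
  -- pointwise bound on the kernel
  have hpoint : ∀ x ∈ (ball x₀ (2*r₀))ᶜ, ∀ y ∈ ball x₀ r₀,
      ENNReal.ofReal (p (2*s) x y * b y) ≤
        (ENNReal.ofReal (A * Real.exp (-c₃ * (dist x x₀ ^ m / s) ^ (1/(m-1)) +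
          2*c₂ * s^(κ/m))) * (ENNReal.ofReal F * Vb⁻¹)) * ENNReal.ofReal (b y) := by
    intro x hx y hy
    have hxd : 2*r₀ ≤ dist x x₀ := by
      simp only [Set.mem_compl_iff, mem_ball, not_lt] at hx
      exact hx
    have hyd : dist y x₀ < r₀ := mem_ball.1 hy
    have hv := hμ y R hR0
    have hvR : (0:ℝ) < (μ (ball y R)).toReal := ENNReal.toReal_pos hv.1.ne' hv.2.ne
    have hp1 := hUB (2*s) x y h2s
    have hdxy : dist x x₀ / 2 ≤ dist x y := by
      have h := dist_triangle x y x₀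
      linarith
    have hE : -c₁ * (dist x y ^ m / (2*s)) ^ (1/(m-1)) + c₂ * (2*s)^(κ/m) ≤
        -c₃ * (dist x x₀ ^ m / s) ^ (1/(m-1)) + 2*c₂ * s^(κ/m) := by
      have part1 : c₃ * (dist x x₀ ^ m / s) ^ (1/(m-1)) ≤
          c₁ * (dist x y ^ m / (2*s)) ^ (1/(m-1)) := by
        have h1 : (dist x x₀ / 2) ^ m ≤ dist x y ^ m :=
          Real.rpow_le_rpow (by positivity) hdxy hm0.le
        have h2 : (dist x x₀ / 2) ^ m = dist x x₀ ^ m / (2:ℝ)^m :=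
          div_rpow dist_nonneg (by norm_num) m
        have h2m : (0:ℝ) < (2:ℝ)^m := Real.rpow_pos_of_pos two_pos m
        have h3 : dist x x₀ ^ m / s / (2:ℝ)^(m+1) ≤ dist x y ^ m / (2*s) := by
          have he : dist x x₀ ^ m / s / (2:ℝ)^(m+1) = (dist x x₀ ^ m / (2:ℝ)^m) / (2*s) := by
            rw [Real.rpow_add two_pos, Real.rpow_one, div_div, div_div]
            ring_nf
          rw [he]
          have h1' : dist x x₀ ^ m / (2:ℝ)^m ≤ dist x y ^ m := by rw [← h2]; exact h1
          exact div_le_div_of_nonneg_right h1' h2s.le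
        have h4 : (dist x x₀ ^ m / s / (2:ℝ)^(m+1)) ^ (1/(m-1)) ≤
            (dist x y ^ m / (2*s)) ^ (1/(m-1)) :=
          Real.rpow_le_rpow (by positivity) h3 (by positivity)
        have h5 : (dist x x₀ ^ m / s / (2:ℝ)^(m+1)) ^ (1/(m-1)) =
            (dist x x₀ ^ m / s) ^ (1/(m-1)) / ((2:ℝ)^(m+1))^(1/(m-1)) :=
          div_rpow (by positivity) (by positivity) _
        have h6 : c₃ * (dist x x₀ ^ m / s) ^ (1/(m-1)) =
            c₁ * ((dist x x₀ ^ m / s) ^ (1/(m-1)) / ((2:ℝ)^(m+1))^(1/(m-1))) := by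
          rw [hc₃def]; field_simp
        rw [h6, ← h5]
        exact mul_le_mul_of_nonneg_left h4 hc₁.le
      have part2 : c₂ * (2*s)^(κ/m) ≤ 2*c₂ * s^(κ/m) := by
        have ha : (2*s)^(κ/m) = (2:ℝ)^(κ/m) * s^(κ/m) :=
          Real.mul_rpow (by norm_num) hs.le
        have hb : (2:ℝ)^(κ/m) ≤ 2 := by
          have := Real.rpow_le_rpow_of_exponent_le one_le_two hκm
          rwa [Real.rpow_one] at this
        have hsk : (0:ℝ) ≤ s^(κ/m) := Real.rpow_nonneg hs.le _
        rw [ha]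
        calc c₂ * ((2:ℝ)^(κ/m) * s^(κ/m)) ≤ c₂ * (2 * s^(κ/m)) :=
              mul_le_mul_of_nonneg_left (mul_le_mul_of_nonneg_right hb hsk) hc₂.le
        _ = 2*c₂ * s^(κ/m) := by ring
      linarith
    have hp2 : p (2*s) x y ≤ A * Real.exp (-c₃ * (dist x x₀ ^ m / s) ^ (1/(m-1)) +
        2*c₂ * s^(κ/m)) / (μ (ball y R)).toReal := by
      refine le_trans hp1 ?_
      have hnum : A * Real.exp (-c₁ * (dist x y ^ m / (2*s)) ^ (1/(m-1)) + c₂ * (2*s)^(κ/m)) ≤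
          A * Real.exp (-c₃ * (dist x x₀ ^ m / s) ^ (1/(m-1)) + 2*c₂ * s^(κ/m)) :=
        mul_le_mul_of_nonneg_left (Real.exp_le_exp.2 hE) hA.le
      exact div_le_div_of_nonneg_right hnum hvR.le
    have h6 : ENNReal.ofReal (p (2*s) x y * b y) ≤
        ENNReal.ofReal ((A * Real.exp (-c₃ * (dist x x₀ ^ m / s) ^ (1/(m-1)) +
          2*c₂ * s^(κ/m)) / (μ (ball y R)).toReal)) * ENNReal.ofReal (b y) := by
      rw [← ENNReal.ofReal_mul (by positivity)]
      exact ENNReal.ofReal_le_ofReal (mul_le_mul_of_nonneg_right hp2 (hb0 y))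
    have h7 : ENNReal.ofReal ((A * Real.exp (-c₃ * (dist x x₀ ^ m / s) ^ (1/(m-1)) +
          2*c₂ * s^(κ/m)) / (μ (ball y R)).toReal)) =
        ENNReal.ofReal (A * Real.exp (-c₃ * (dist x x₀ ^ m / s) ^ (1/(m-1)) +
          2*c₂ * s^(κ/m))) * (μ (ball y R))⁻¹ := by
      rw [ENNReal.ofReal_div_of_pos hvR, ENNReal.ofReal_toReal hv.2.ne, div_eq_mul_inv]
    have h8 : (μ (ball y R))⁻¹ ≤ ENNReal.ofReal F * Vb⁻¹ := by
      rw [← div_eq_mul_inv,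
        ENNReal.le_div_iff_mul_le (Or.inl hVb_pos.ne') (Or.inl hVb_lt.ne)]
      calc (μ (ball y R))⁻¹ * Vb ≤ (μ (ball y R))⁻¹ * (ENNReal.ofReal F * μ (ball y R)) :=
            mul_le_mul' le_rfl (hFV y hy)
      _ = ENNReal.ofReal F * ((μ (ball y R))⁻¹ * μ (ball y R)) := by ring
      _ = ENNReal.ofReal F := by rw [ENNReal.inv_mul_cancel hv.1.ne' hv.2.ne, mul_one]
    calc ENNReal.ofReal (p (2*s) x y * b y) ≤
        (ENNReal.ofReal (A * Real.exp (-c₃ * (dist x x₀ ^ m / s) ^ (1/(m-1)) +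
          2*c₂ * s^(κ/m))) * (μ (ball y R))⁻¹) * ENNReal.ofReal (b y) := by
          rw [← h7]; exact h6
    _ ≤ (ENNReal.ofReal (A * Real.exp (-c₃ * (dist x x₀ ^ m / s) ^ (1/(m-1)) +
          2*c₂ * s^(κ/m))) * (ENNReal.ofReal F * Vb⁻¹)) * ENNReal.ofReal (b y) :=
        mul_le_mul' (mul_le_mul' le_rfl h8) le_rfl
  -- inner integral bound
  have hinner : ∀ x ∈ (ball x₀ (2*r₀))ᶜ,
      (∫⁻ y in ball x₀ r₀, ENNReal.ofReal (p (2*s) x y * b y) ∂μ) ≤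
        (ENNReal.ofReal F * Vb⁻¹ * I) *
          ENNReal.ofReal (A * Real.exp (-c₃ * (dist x x₀ ^ m / s) ^ (1/(m-1)) +
            2*c₂ * s^(κ/m))) := by
    intro x hx
    have hconst_ne : (ENNReal.ofReal (A * Real.exp (-c₃ * (dist x x₀ ^ m / s) ^ (1/(m-1)) +
        2*c₂ * s^(κ/m))) * (ENNReal.ofReal F * Vb⁻¹)) ≠ ⊤ :=
      ENNReal.mul_ne_top ENNReal.ofReal_ne_top
        (ENNReal.mul_ne_top ENNReal.ofReal_ne_top (ENNReal.inv_ne_top.2 hVb_pos.ne'))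
    calc (∫⁻ y in ball x₀ r₀, ENNReal.ofReal (p (2*s) x y * b y) ∂μ)
        ≤ ∫⁻ y in ball x₀ r₀,
            (ENNReal.ofReal (A * Real.exp (-c₃ * (dist x x₀ ^ m / s) ^ (1/(m-1)) +
              2*c₂ * s^(κ/m))) * (ENNReal.ofReal F * Vb⁻¹)) * ENNReal.ofReal (b y) ∂μ :=
          setLIntegral_mono (by fun_prop) (fun y hy => hpoint x hx y hy)
    _ = (ENNReal.ofReal (A * Real.exp (-c₃ * (dist x x₀ ^ m / s) ^ (1/(m-1)) +
          2*c₂ * s^(κ/m))) * (ENNReal.ofReal F * Vb⁻¹)) *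
          ∫⁻ y in ball x₀ r₀, ENNReal.ofReal (b y) ∂μ :=
        lintegral_const_mul' _ _ hconst_ne
    _ ≤ (ENNReal.ofReal (A * Real.exp (-c₃ * (dist x x₀ ^ m / s) ^ (1/(m-1)) +
          2*c₂ * s^(κ/m))) * (ENNReal.ofReal F * Vb⁻¹)) * I :=
        mul_le_mul' le_rfl (setLIntegral_le_lintegral _ _)
    _ = (ENNReal.ofReal F * Vb⁻¹ * I) *
          ENNReal.ofReal (A * Real.exp (-c₃ * (dist x x₀ ^ m / s) ^ (1/(m-1)) +
            2*c₂ * s^(κ/m))) := by ring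
  -- abbreviations for the main chain
  set W : ENNReal := ENNReal.ofReal F * Vb⁻¹ * I with hWdef
  have hW_ne : W ≠ ⊤ :=
    ENNReal.mul_ne_top (ENNReal.mul_ne_top ENNReal.ofReal_ne_top
      (ENNReal.inv_ne_top.2 hVb_pos.ne')) hbI.ne
  have hWh_ne : W ^ ((1:ℝ)/2) ≠ ⊤ :=
    (ENNReal.rpow_lt_top_of_nonneg (by norm_num) hW_ne).ne
  have hsR : s^(1/m) ≤ R := by
    rw [hRdef]
    exact Real.rpow_le_rpow hs.le (by linarith) (by positivity)
  have hballVb : μ (ball x₀ (s^(1/m))) ≤ Vb :=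
    le_trans (measure_mono (ball_subset_ball hsR))
      (le_biSup (fun y => μ (ball y R)) (mem_ball_self hr₀))
  have h2sκ : (2*s)^(κ/m) ≤ 2 * s^(κ/m) := by
    have ha : (2*s)^(κ/m) = (2:ℝ)^(κ/m) * s^(κ/m) := Real.mul_rpow (by norm_num) hs.le
    have hb : (2:ℝ)^(κ/m) ≤ 2 := by
      have := Real.rpow_le_rpow_of_exponent_le one_le_two hκm
      rwa [Real.rpow_one] at this
    have hsk : (0:ℝ) ≤ s^(κ/m) := Real.rpow_nonneg hs.le _
    rw [ha]
    nlinarith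
  -- bound on the doubling factor F
  set G₂ : ℝ := Real.sqrt C₆ *
    Real.exp (c₃/16 * (r₀^m/s) ^ (1/(m-1)) + s^(κ/m)) with hG₂def
  have hG₂0 : 0 < G₂ := by positivity
  have hFG : F ≤ G₂^2 := by
    set u : ℝ := r₀ / s^(1/m) with hudef
    have hsm0 : (0:ℝ) < s^(1/m) := Real.rpow_pos_of_pos hs _
    have hu0 : 0 ≤ u := by positivity
    have hur : u * s^(1/m) = r₀ := by
      rw [hudef, div_mul_cancel₀ _ (ne_of_gt hsm0)]
    have hτu : τ ≤ 1 + 2*u := by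
      rw [hτdef, div_le_iff₀ hR0]
      have huR : r₀ ≤ u * R := by
        calc r₀ = u * s^(1/m) := hur.symm
        _ ≤ u * R := mul_le_mul_of_nonneg_left hsR hu0
      nlinarith
    have hτ0 : (0:ℝ) ≤ τ := by linarith
    have hstep : D * τ^D * Real.exp (τ^κ) ≤
        C₆ * Real.exp (c₃/8 * u ^ (m/(m-1))) := by
      refine le_trans ?_ (hC₆ u hu0)
      have h1 : τ^D ≤ (1+2*u)^D := Real.rpow_le_rpow hτ0 hτu (by linarith)
      have h2 : τ^κ ≤ (1+2*u)^κ := Real.rpow_le_rpow hτ0 hτu hκ0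
      have h3 : Real.exp (τ^κ) ≤ Real.exp ((1+2*u)^κ) := Real.exp_le_exp.2 h2
      have h4 : D * τ^D ≤ D * (1+2*u)^D := mul_le_mul_of_nonneg_left h1 (by linarith)
      exact mul_le_mul h4 h3 (Real.exp_pos _).le (by positivity)
    have huQ : u ^ (m/(m-1)) = (r₀^m/s) ^ (1/(m-1)) := by
      rw [show m/(m-1) = m * (1/(m-1)) by rw [mul_one_div]]
      rw [Real.rpow_mul hu0]
      congr 1
      rw [hudef, div_rpow hr₀.le hsm0.le]
      congr 1
      rw [← Real.rpow_mul hs.le, one_div, inv_mul_cancel₀ (ne_of_gt hm0), Real.rpow_one]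
    have hRκ : R^κ ≤ 2 * s^(κ/m) := by
      have h1 : R^κ = (2*s)^(κ/m) := by
        rw [hRdef, ← Real.rpow_mul h2s.le]
        congr 1
        field_simp
      rw [h1]; exact h2sκ
    have hG₂2 : G₂^2 = C₆ * Real.exp (c₃/8 * (r₀^m/s) ^ (1/(m-1)) + 2*s^(κ/m)) := by
      rw [hG₂def, mul_pow, Real.sq_sqrt hC₆0.le, pow_two, ← Real.exp_add]
      congr 1
      ring
    calc F = (D * τ^D * Real.exp (τ^κ)) * Real.exp (R^κ) := by
          rw [hFdef, Real.exp_add]; ring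
    _ ≤ (C₆ * Real.exp (c₃/8 * u ^ (m/(m-1)))) * Real.exp (2 * s^(κ/m)) :=
          mul_le_mul hstep (Real.exp_le_exp.2 hRκ) (Real.exp_pos _).le (by positivity)
    _ = G₂^2 := by
          rw [hG₂2, huQ, mul_assoc, ← Real.exp_add]
  have hFhalf : (ENNReal.ofReal F) ^ ((1:ℝ)/2) ≤ ENNReal.ofReal G₂ := by
    calc (ENNReal.ofReal F) ^ ((1:ℝ)/2) ≤ (ENNReal.ofReal (G₂^2)) ^ ((1:ℝ)/2) :=
          ENNReal.rpow_le_rpow (ENNReal.ofReal_le_ofReal hFG) (by norm_num)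
    _ = ENNReal.ofReal G₂ := by
          rw [ENNReal.ofReal_pow hG₂0.le, ← ENNReal.rpow_natCast (ENNReal.ofReal G₂) 2,
            ← ENNReal.rpow_mul]
          norm_num
  -- cancellation of Vb
  have hVbc : (Vb ^ ((1:ℝ)/2))⁻¹ * Vb = Vb ^ ((1:ℝ)/2) := by
    have h0 : Vb ^ ((1:ℝ)/2) ≠ 0 := by
      simp [ENNReal.rpow_eq_zero_iff, hVb_pos.ne', hVb_lt.ne]
    have ht : Vb ^ ((1:ℝ)/2) ≠ ⊤ := ENNReal.rpow_ne_top_of_nonneg (by norm_num) hVb_lt.ne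
    have hx2 : Vb ^ ((1:ℝ)/2) * Vb ^ ((1:ℝ)/2) = Vb := by
      rw [← ENNReal.rpow_add _ _ hVb_pos.ne' hVb_lt.ne,
        show (1:ℝ)/2 + 1/2 = 1 by norm_num, ENNReal.rpow_one]
    calc (Vb ^ ((1:ℝ)/2))⁻¹ * Vb
        = (Vb ^ ((1:ℝ)/2))⁻¹ * (Vb ^ ((1:ℝ)/2) * Vb ^ ((1:ℝ)/2)) := by rw [hx2]
    _ = ((Vb ^ ((1:ℝ)/2))⁻¹ * Vb ^ ((1:ℝ)/2)) * Vb ^ ((1:ℝ)/2) := by rw [mul_assoc]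
    _ = Vb ^ ((1:ℝ)/2) := by rw [ENNReal.inv_mul_cancel h0 ht, one_mul]
  have hWsplit : W ^ ((1:ℝ)/2) =
      (ENNReal.ofReal F) ^ ((1:ℝ)/2) * (Vb ^ ((1:ℝ)/2))⁻¹ * I ^ ((1:ℝ)/2) := by
    rw [hWdef, ENNReal.mul_rpow_of_nonneg _ _ (by norm_num : (0:ℝ) ≤ 1/2),
      ENNReal.mul_rpow_of_nonneg _ _ (by norm_num : (0:ℝ) ≤ 1/2), ENNReal.inv_rpow]
  -- the main chain
  calc (∫⁻ x in (ball x₀ (2 * r₀))ᶜ,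
          (∫⁻ y in ball x₀ r₀, ENNReal.ofReal (p (2 * s) x y * b y) ∂μ) ^
            ((1 : ℝ) / 2) ∂μ)
      ≤ ∫⁻ x in (ball x₀ (2*r₀))ᶜ, W ^ ((1:ℝ)/2) *
          ENNReal.ofReal (Real.sqrt A *
            Real.exp ((-c₃ * (dist x x₀ ^ m / s) ^ (1/(m-1)) + 2*c₂ * s^(κ/m)) * (1/2))) ∂μ := by
        refine setLIntegral_mono (Measurable.const_mul (by fun_prop) _) (fun x hx => ?_)
        calc (∫⁻ y in ball x₀ r₀, ENNReal.ofReal (p (2*s) x y * b y) ∂μ) ^ ((1:ℝ)/2)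
            ≤ (W * ENNReal.ofReal (A * Real.exp (-c₃ * (dist x x₀ ^ m / s) ^ (1/(m-1)) +
                2*c₂ * s^(κ/m)))) ^ ((1:ℝ)/2) :=
              ENNReal.rpow_le_rpow (hinner x hx) (by norm_num)
        _ = W ^ ((1:ℝ)/2) * (ENNReal.ofReal (A * Real.exp (-c₃ * (dist x x₀ ^ m / s) ^ (1/(m-1)) +
              2*c₂ * s^(κ/m)))) ^ ((1:ℝ)/2) :=
              ENNReal.mul_rpow_of_nonneg _ _ (by norm_num)
        _ = W ^ ((1:ℝ)/2) * ENNReal.ofReal (Real.sqrt A *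
              Real.exp ((-c₃ * (dist x x₀ ^ m / s) ^ (1/(m-1)) + 2*c₂ * s^(κ/m)) * (1/2))) := by
              rw [ENNReal.ofReal_rpow_of_nonneg (by positivity) (by norm_num)]
              congr 1
              rw [Real.mul_rpow hA.le (Real.exp_pos _).le, Real.sqrt_eq_rpow, ← Real.exp_mul]
  _ = W ^ ((1:ℝ)/2) * ∫⁻ x in (ball x₀ (2*r₀))ᶜ,
        ENNReal.ofReal (Real.sqrt A *
          Real.exp ((-c₃ * (dist x x₀ ^ m / s) ^ (1/(m-1)) + 2*c₂ * s^(κ/m)) * (1/2))) ∂μ :=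
      lintegral_const_mul' _ _ hWh_ne
  _ ≤ W ^ ((1:ℝ)/2) * (ENNReal.ofReal (Real.sqrt A * Real.exp (c₂ * s^(κ/m)) *
        Real.exp (-(c₃/4) * (r₀^m/s) ^ (1/(m-1)))) *
        ∫⁻ x in (ball x₀ (2*r₀))ᶜ,
          ENNReal.ofReal (Real.exp (-(c₃/4) * (dist x x₀ ^ m / s) ^ (1/(m-1)))) ∂μ) := by
      refine mul_le_mul' le_rfl ?_
      calc ∫⁻ x in (ball x₀ (2*r₀))ᶜ,
            ENNReal.ofReal (Real.sqrt A *
              Real.exp ((-c₃ * (dist x x₀ ^ m / s) ^ (1/(m-1)) + 2*c₂ * s^(κ/m)) * (1/2))) ∂μ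
          ≤ ∫⁻ x in (ball x₀ (2*r₀))ᶜ,
              ENNReal.ofReal (Real.sqrt A * Real.exp (c₂ * s^(κ/m)) *
                Real.exp (-(c₃/4) * (r₀^m/s) ^ (1/(m-1)))) *
              ENNReal.ofReal (Real.exp (-(c₃/4) * (dist x x₀ ^ m / s) ^ (1/(m-1)))) ∂μ := by
            refine setLIntegral_mono (by fun_prop) (fun x hx => ?_)
            have hxd : 2*r₀ ≤ dist x x₀ := by
              simpa only [Set.mem_compl_iff, mem_ball, not_lt] using hx
            have hQ : (r₀^m/s) ^ (1/(m-1)) ≤ (dist x x₀ ^ m / s) ^ (1/(m-1)) := by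
              apply Real.rpow_le_rpow (by positivity) ?_ (by positivity)
              apply div_le_div_of_nonneg_right ?_ hs.le
              exact Real.rpow_le_rpow hr₀.le (by linarith) hm0.le
            rw [← ENNReal.ofReal_mul (by positivity)]
            apply ENNReal.ofReal_le_ofReal
            have hre : Real.sqrt A * Real.exp (c₂ * s^(κ/m)) *
                Real.exp (-(c₃/4) * (r₀^m/s) ^ (1/(m-1))) *
                Real.exp (-(c₃/4) * (dist x x₀ ^ m / s) ^ (1/(m-1))) =
                Real.sqrt A * Real.exp (c₂ * s^(κ/m) +
                  -(c₃/4) * (r₀^m/s) ^ (1/(m-1)) +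
                  -(c₃/4) * (dist x x₀ ^ m / s) ^ (1/(m-1))) := by
              rw [Real.exp_add, Real.exp_add]; ring
            rw [hre]
            apply mul_le_mul_of_nonneg_left ?_ (Real.sqrt_nonneg A)
            apply Real.exp_le_exp.2
            nlinarith
      _ = ENNReal.ofReal (Real.sqrt A * Real.exp (c₂ * s^(κ/m)) *
            Real.exp (-(c₃/4) * (r₀^m/s) ^ (1/(m-1)))) *
            ∫⁻ x in (ball x₀ (2*r₀))ᶜ,
              ENNReal.ofReal (Real.exp (-(c₃/4) * (dist x x₀ ^ m / s) ^ (1/(m-1)))) ∂μ :=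
          lintegral_const_mul' _ _ ENNReal.ofReal_ne_top
  _ ≤ W ^ ((1:ℝ)/2) * (ENNReal.ofReal (Real.sqrt A * Real.exp (c₂ * s^(κ/m)) *
        Real.exp (-(c₃/4) * (r₀^m/s) ^ (1/(m-1)))) *
        (ENNReal.ofReal (C₅ * Real.exp (s ^ (κ/m))) * Vb)) := by
      refine mul_le_mul' le_rfl (mul_le_mul' le_rfl ?_)
      calc ∫⁻ x in (ball x₀ (2*r₀))ᶜ,
            ENNReal.ofReal (Real.exp (-(c₃/4) * (dist x x₀ ^ m / s) ^ (1/(m-1)))) ∂μ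
          ≤ ∫⁻ x, ENNReal.ofReal (Real.exp (-(c₃/4) * (dist x x₀ ^ m / s) ^ (1/(m-1)))) ∂μ :=
            setLIntegral_le_lintegral _ _
      _ ≤ ENNReal.ofReal (C₅ * Real.exp (s ^ (κ/m))) * μ (ball x₀ (s ^ (1/m))) := hC₅ x₀ s hs
      _ ≤ ENNReal.ofReal (C₅ * Real.exp (s ^ (κ/m))) * Vb := mul_le_mul' le_rfl hballVb
  _ ≤ (ENNReal.ofReal G₂ * (Vb ^ ((1:ℝ)/2))⁻¹ * I ^ ((1:ℝ)/2)) *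
        (ENNReal.ofReal (Real.sqrt A * Real.exp (c₂ * s^(κ/m)) *
          Real.exp (-(c₃/4) * (r₀^m/s) ^ (1/(m-1)))) *
          (ENNReal.ofReal (C₅ * Real.exp (s ^ (κ/m))) * Vb)) := by
      refine mul_le_mul' ?_ le_rfl
      rw [hWsplit]
      exact mul_le_mul' (mul_le_mul' hFhalf le_rfl) le_rfl
  _ = (ENNReal.ofReal G₂ * ENNReal.ofReal (Real.sqrt A * Real.exp (c₂ * s^(κ/m)) *
        Real.exp (-(c₃/4) * (r₀^m/s) ^ (1/(m-1)))) *
        ENNReal.ofReal (C₅ * Real.exp (s ^ (κ/m)))) *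
        (I ^ ((1:ℝ)/2) * ((Vb ^ ((1:ℝ)/2))⁻¹ * Vb)) := by ring
  _ = (ENNReal.ofReal (G₂ * (Real.sqrt A * Real.exp (c₂ * s^(κ/m)) *
        Real.exp (-(c₃/4) * (r₀^m/s) ^ (1/(m-1)))) * (C₅ * Real.exp (s ^ (κ/m))))) *
        (I ^ ((1:ℝ)/2) * Vb ^ ((1:ℝ)/2)) := by
      rw [hVbc, ← ENNReal.ofReal_mul (by positivity), ← ENNReal.ofReal_mul (by positivity)]
  _ ≤ ENNReal.ofReal (Real.sqrt A * Real.sqrt C₆ * C₅ *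
        Real.exp (-(c₃/8) * (r₀ ^ m / s) ^ (1 / (m - 1)) + (c₂ + 2) * s ^ (κ / m))) *
        (I * Vb) ^ ((1:ℝ)/2) := by
      rw [ENNReal.mul_rpow_of_nonneg _ _ (by norm_num : (0:ℝ) ≤ 1/2)]
      refine mul_le_mul' (ENNReal.ofReal_le_ofReal ?_) le_rfl
      rw [hG₂def]
      exact const_combine (Real.sqrt A) (Real.sqrt C₆) C₅ c₂ c₃ ((r₀^m/s) ^ (1/(m-1)))
        (s^(κ/m)) (Real.sqrt_nonneg _) (Real.sqrt_nonneg _) hC₅0.le hc₃.le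
        (Real.rpow_nonneg (by positivity) _)
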